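/- Let λ ∈ (0,1] be a real number and k ≥ 0 a fixed integer. Let (n_j) and (M_j) be sequences of positive integers with k ≤ n_j ≤ M_j for all j, both tending to infinity, such that n_j/M_j → λ as j → ∞, and for each j let 𝓝_j be a subset of size n_j of a set 𝓜_j of size M_j. Then the normalized second moments S₂(k;M_j,n_j) := (1/(n_j² M_j^{n_j})) Σ_{x ∈ 𝓜_j^{n_j}} m_k(x)² converge to ((λ^k/k!)·e^{−λ})² as j → ∞. -/

import Mathlib

open Filter Finset

lemma card_filter_forall {n M : ℕ} (p : Fin n → Fin M → Prop) [∀ i v, Decidable (p i v)] :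
    (Finset.univ.filter fun x : Fin n → Fin M => ∀ i, p i (x i)).card
      = ∏ i, (Finset.univ.filter (p i)).card := by
  rw [← Fintype.card_piFinset]
  congr 1
  ext x
  simp [Fintype.mem_piFinset]

lemma card_fiber_single {n M : ℕ} (y : Fin M) (S : Finset (Fin n)) :
    (Finset.univ.filter fun x : Fin n → Fin M =>
        (Finset.univ.filter fun i => x i = y) = S).card = (M - 1) ^ (n - S.card) := by
  have h1 : (Finset.univ.filter fun x : Fin n → Fin M =>
        (Finset.univ.filter fun i => x i = y) = S)
      = Finset.univ.filter fun x : Fin n → Fin M => ∀ i, (x i = y ↔ i ∈ S) := by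
    ext x
    simp [Finset.ext_iff]
  rw [h1, card_filter_forall (fun i v => v = y ↔ i ∈ S)]
  have h2 : ∀ i : Fin n, (Finset.univ.filter fun v : Fin M => (v = y ↔ i ∈ S)).card
      = if i ∈ S then 1 else M - 1 := by
    intro i
    by_cases hi : i ∈ S <;> simp [hi, Finset.filter_eq', Finset.filter_ne']
  simp_rw [h2]
  rw [Finset.prod_ite, Finset.prod_const_one, one_mul, Finset.prod_const,
    Finset.filter_not, Finset.filter_mem_eq_inter, Finset.univ_inter,
    Finset.card_sdiff_of_subset (Finset.subset_univ S), Finset.card_univ, Fintype.card_fin]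

lemma card_fiber_pair {n M : ℕ} {y z : Fin M} (hyz : y ≠ z) {S T : Finset (Fin n)}
    (hST : Disjoint S T) :
    (Finset.univ.filter fun x : Fin n → Fin M =>
        (Finset.univ.filter fun i => x i = y) = S ∧
        (Finset.univ.filter fun i => x i = z) = T).card
      = (M - 2) ^ (n - (S.card + T.card)) := by
  have h1 : (Finset.univ.filter fun x : Fin n → Fin M =>
        (Finset.univ.filter fun i => x i = y) = S ∧
        (Finset.univ.filter fun i => x i = z) = T)
      = Finset.univ.filter fun x : Fin n → Fin M =>
          ∀ i, ((x i = y ↔ i ∈ S) ∧ (x i = z ↔ i ∈ T)) := by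
    ext x
    simp [Finset.ext_iff, forall_and]
  rw [h1, card_filter_forall (fun i v => (v = y ↔ i ∈ S) ∧ (v = z ↔ i ∈ T))]
  have h2 : ∀ i : Fin n, (Finset.univ.filter
        fun v : Fin M => ((v = y ↔ i ∈ S) ∧ (v = z ↔ i ∈ T))).card
      = if i ∈ S ∪ T then 1 else M - 2 := by
    intro i
    by_cases hiS : i ∈ S
    · have hiT : i ∉ T := fun h => (Finset.disjoint_left.mp hST hiS) h
      have : (Finset.univ.filter fun v : Fin M => ((v = y ↔ i ∈ S) ∧ (v = z ↔ i ∈ T)))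
          = {y} := by
        ext v
        simp only [Finset.mem_filter, Finset.mem_univ, true_and, Finset.mem_singleton,
          hiS, hiT, iff_true, iff_false]
        constructor
        · rintro ⟨h, _⟩; exact h
        · rintro rfl; exact ⟨rfl, hyz⟩
      rw [this]
      simp [hiS]
    · by_cases hiT : i ∈ T
      · have : (Finset.univ.filter fun v : Fin M => ((v = y ↔ i ∈ S) ∧ (v = z ↔ i ∈ T)))
            = {z} := by
          ext v
          simp only [Finset.mem_filter, Finset.mem_univ, true_and, Finset.mem_singleton,
            hiS, hiT, iff_true, iff_false]
          constructor
          · rintro ⟨_, h⟩; exact h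
          · rintro rfl; exact ⟨hyz.symm, rfl⟩
        rw [this]
        simp [hiT]
      · have : (Finset.univ.filter fun v : Fin M => ((v = y ↔ i ∈ S) ∧ (v = z ↔ i ∈ T)))
            = Finset.univ \ {y, z} := by
          ext v
          simp [hiS, hiT, not_or]
        rw [this]
        have hys : ({y, z} : Finset (Fin M)).card = 2 := Finset.card_pair hyz
        rw [Finset.card_sdiff_of_subset (Finset.subset_univ _), Finset.card_univ, Fintype.card_fin, hys]
        simp [hiS, hiT]
  simp_rw [h2]
  rw [Finset.prod_ite, Finset.prod_const_one, one_mul, Finset.prod_const,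
    Finset.filter_not, Finset.filter_mem_eq_inter, Finset.univ_inter,
    Finset.card_sdiff_of_subset (Finset.subset_univ _), Finset.card_univ, Fintype.card_fin,
    Finset.card_union_of_disjoint hST]

lemma count_single (n M k : ℕ) (y : Fin M) :
    (Finset.univ.filter fun x : Fin n → Fin M =>
        (Finset.univ.filter fun i => x i = y).card = k).card
      = n.choose k * (M - 1) ^ (n - k) := by
  have h1 : (Finset.univ.filter fun x : Fin n → Fin M =>
        (Finset.univ.filter fun i => x i = y).card = k)
      = (Finset.powersetCard k (Finset.univ : Finset (Fin n))).biUnion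
          (fun S => Finset.univ.filter fun x : Fin n → Fin M =>
            (Finset.univ.filter fun i => x i = y) = S) := by
    ext x
    simp only [Finset.mem_filter, Finset.mem_univ, true_and, Finset.mem_biUnion,
      Finset.mem_powersetCard_univ]
    constructor
    · intro h; exact ⟨_, h, rfl⟩
    · rintro ⟨S, hS, rfl⟩; exact hS
  rw [h1, Finset.card_biUnion]
  · have h2 : ∀ S ∈ Finset.powersetCard k (Finset.univ : Finset (Fin n)),
        (Finset.univ.filter fun x : Fin n → Fin M =>
          (Finset.univ.filter fun i => x i = y) = S).card = (M - 1) ^ (n - k) := by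
      intro S hS
      rw [card_fiber_single, Finset.mem_powersetCard_univ.mp hS]
    rw [Finset.sum_congr rfl h2, Finset.sum_const, Finset.card_powersetCard,
      Finset.card_univ, Fintype.card_fin, smul_eq_mul]
  · intro S hS S' hS' hne
    rw [Function.onFun, Finset.disjoint_left]
    intro x hx hx'
    simp only [Finset.mem_filter] at hx hx'
    exact hne (hx.2 ▸ hx'.2)

lemma count_pair (n M k : ℕ) {y z : Fin M} (hyz : y ≠ z) :
    (Finset.univ.filter fun x : Fin n → Fin M =>
        (Finset.univ.filter fun i => x i = y).card = k ∧
        (Finset.univ.filter fun i => x i = z).card = k).card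
      = n.choose k * ((n - k).choose k * (M - 2) ^ (n - 2 * k)) := by
  have h1 : (Finset.univ.filter fun x : Fin n → Fin M =>
        (Finset.univ.filter fun i => x i = y).card = k ∧
        (Finset.univ.filter fun i => x i = z).card = k)
      = (Finset.powersetCard k (Finset.univ : Finset (Fin n))).biUnion
          (fun S => (Finset.powersetCard k Sᶜ).biUnion
            (fun T => Finset.univ.filter fun x : Fin n → Fin M =>
              (Finset.univ.filter fun i => x i = y) = S ∧
              (Finset.univ.filter fun i => x i = z) = T)) := by
    ext x
    simp only [Finset.mem_filter, Finset.mem_univ, true_and, Finset.mem_biUnion,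
      Finset.mem_powersetCard_univ, Finset.mem_powersetCard]
    constructor
    · rintro ⟨hy, hz⟩
      refine ⟨_, ⟨Finset.subset_univ _, hy⟩, _, ⟨?_, hz⟩, rfl, rfl⟩
      intro i hi
      simp only [Finset.mem_filter, Finset.mem_univ, true_and] at hi
      simp only [Finset.mem_compl, Finset.mem_filter, Finset.mem_univ, true_and]
      rw [hi]
      exact hyz.symm
    · rintro ⟨S, hS, T, ⟨hTS, hT⟩, rfl, rfl⟩
      exact ⟨hS.2, hT⟩
  rw [h1, Finset.card_biUnion]
  · have h2 : ∀ S ∈ Finset.powersetCard k (Finset.univ : Finset (Fin n)),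
        ((Finset.powersetCard k Sᶜ).biUnion
            (fun T => Finset.univ.filter fun x : Fin n → Fin M =>
              (Finset.univ.filter fun i => x i = y) = S ∧
              (Finset.univ.filter fun i => x i = z) = T)).card
          = (n - k).choose k * (M - 2) ^ (n - 2 * k) := by
      intro S hS
      have hScard : S.card = k := Finset.mem_powersetCard_univ.mp hS
      rw [Finset.card_biUnion]
      · have h3 : ∀ T ∈ Finset.powersetCard k Sᶜ,
            (Finset.univ.filter fun x : Fin n → Fin M =>
              (Finset.univ.filter fun i => x i = y) = S ∧
              (Finset.univ.filter fun i => x i = z) = T).card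
              = (M - 2) ^ (n - 2 * k) := by
          intro T hT
          rw [Finset.mem_powersetCard] at hT
          have hdisj : Disjoint S T := by
            rw [Finset.disjoint_left]
            intro a haS haT
            exact (Finset.mem_compl.mp (hT.1 haT)) haS
          rw [card_fiber_pair hyz hdisj, hScard, hT.2, two_mul]
        rw [Finset.sum_congr rfl h3, Finset.sum_const, Finset.card_powersetCard,
          Finset.card_compl, Fintype.card_fin, hScard, smul_eq_mul]
      · intro T hT T' hT' hne
        rw [Function.onFun, Finset.disjoint_left]
        intro x hx hx'
        simp only [Finset.mem_filter] at hx hx'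
        exact hne (hx.2.2 ▸ hx'.2.2)
    rw [Finset.sum_congr rfl h2, Finset.sum_const, Finset.card_powersetCard,
      Finset.card_univ, Fintype.card_fin, smul_eq_mul]
  · intro S hS S' hS' hne
    rw [Function.onFun, Finset.disjoint_left]
    intro x hx hx'
    simp only [Finset.mem_biUnion, Finset.mem_filter] at hx hx'
    obtain ⟨T, _, _, h2, _⟩ := hx
    obtain ⟨T', _, _, h2', _⟩ := hx'
    exact hne (h2 ▸ h2')

lemma sum_sq_eq (n M k : ℕ) (N : Finset (Fin M)) :
    ∑ x : Fin n → Fin M,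
      ((N.filter fun y => (Finset.univ.filter fun i => x i = y).card = k).card : ℝ) ^ 2
    = (N.card : ℝ) * ((n.choose k * (M - 1) ^ (n - k) : ℕ) : ℝ)
      + (N.card : ℝ) * ((N.card : ℝ) - 1)
        * ((n.choose k * ((n - k).choose k * (M - 2) ^ (n - 2 * k)) : ℕ) : ℝ) := by
  set A : ℝ := ((n.choose k * (M - 1) ^ (n - k) : ℕ) : ℝ) with hA
  set B : ℝ := ((n.choose k * ((n - k).choose k * (M - 2) ^ (n - 2 * k)) : ℕ) : ℝ) with hB
  have hsq : ∀ x : Fin n → Fin M,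
      ((N.filter fun y => (Finset.univ.filter fun i => x i = y).card = k).card : ℝ) ^ 2
      = ∑ y ∈ N, ∑ z ∈ N,
          (if ((Finset.univ.filter fun i => x i = y).card = k ∧
               (Finset.univ.filter fun i => x i = z).card = k) then (1:ℝ) else 0) := by
    intro x
    rw [Finset.card_filter]
    push_cast
    rw [sq, Finset.sum_mul_sum]
    refine Finset.sum_congr rfl fun y _ => Finset.sum_congr rfl fun z _ => ?_
    by_cases h1 : (Finset.univ.filter fun i => x i = y).card = k <;>
      by_cases h2 : (Finset.univ.filter fun i => x i = z).card = k <;>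
      simp [h1, h2]
  rw [Finset.sum_congr rfl fun x _ => hsq x]
  rw [Finset.sum_comm]
  have hswap : ∀ y ∈ N, (∑ x : Fin n → Fin M, ∑ z ∈ N,
      (if ((Finset.univ.filter fun i => x i = y).card = k ∧
           (Finset.univ.filter fun i => x i = z).card = k) then (1:ℝ) else 0))
      = ∑ z ∈ N, ∑ x : Fin n → Fin M,
      (if ((Finset.univ.filter fun i => x i = y).card = k ∧
           (Finset.univ.filter fun i => x i = z).card = k) then (1:ℝ) else 0) :=
    fun y _ => Finset.sum_comm
  rw [Finset.sum_congr rfl hswap]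
  have hinner : ∀ y ∈ N, ∀ z ∈ N, (∑ x : Fin n → Fin M,
      (if ((Finset.univ.filter fun i => x i = y).card = k ∧
           (Finset.univ.filter fun i => x i = z).card = k) then (1:ℝ) else 0))
      = if z = y then A else B := by
    intro y hy z hz
    rw [Finset.sum_boole]
    by_cases h : z = y
    · subst h
      simp only [if_true, and_self, hA]
      rw [count_single n M k z]
    · rw [if_neg h]
      rw [hB, count_pair n M k (fun hc => h hc.symm)]
  rw [Finset.sum_congr rfl fun y hy => Finset.sum_congr rfl (hinner y hy)]
  have hz : ∀ y ∈ N, (∑ z ∈ N, if z = y then A else B) = N.card * B + (A - B) := by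
    intro y hy
    have : ∀ z ∈ N, (if z = y then A else B) = B + (if z = y then A - B else 0) := by
      intro z _; by_cases h : z = y <;> simp [h]
    rw [Finset.sum_congr rfl this, Finset.sum_add_distrib, Finset.sum_const,
      Finset.sum_ite_eq' N y fun _ => A - B, if_pos hy]
    push_cast
    ring
  rw [Finset.sum_congr rfl hz, Finset.sum_const]
  push_cast
  ring

lemma choose_div_pow_tendsto (lam : ℝ) (k : ℕ) (c M : ℕ → ℕ)
    (hc : Tendsto c atTop atTop) (hM : Tendsto M atTop atTop)
    (hratio : Tendsto (fun j => (c j : ℝ) / (M j : ℝ)) atTop (nhds lam)) :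
    Tendsto (fun j => ((c j).choose k : ℝ) / (M j : ℝ) ^ k) atTop
      (nhds (lam ^ k / (k.factorial : ℝ))) := by
  have hMr : Tendsto (fun j => (M j : ℝ)) atTop atTop :=
    tendsto_natCast_atTop_atTop.comp hM
  have hMinv : Tendsto (fun j => (M j : ℝ)⁻¹) atTop (nhds 0) :=
    hMr.inv_tendsto_atTop
  have hfac : ∀ i : ℕ, Tendsto (fun j => (c j : ℝ) / (M j : ℝ) - i * (M j : ℝ)⁻¹)
      atTop (nhds lam) := by
    intro i
    have := hratio.sub ((hMinv.const_mul (i:ℝ)))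
    simpa using this
  have hprod : Tendsto (fun j => (∏ i ∈ Finset.range k,
      ((c j : ℝ) / (M j : ℝ) - i * (M j : ℝ)⁻¹)) / (k.factorial : ℝ)) atTop
      (nhds (lam ^ k / (k.factorial : ℝ))) := by
    have : Tendsto (fun j => ∏ i ∈ Finset.range k,
        ((c j : ℝ) / (M j : ℝ) - i * (M j : ℝ)⁻¹)) atTop (nhds (lam ^ k)) := by
      have := tendsto_finset_prod (Finset.range k)
        (fun i _ => hfac i)
      simpa using this
    exact this.div_const _
  refine hprod.congr' ?_
  have hev : ∀ᶠ j in atTop, k ≤ c j ∧ 1 ≤ M j :=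
    (hc.eventually_ge_atTop k).and (hM.eventually_ge_atTop 1)
  filter_upwards [hev] with j hj
  obtain ⟨hkc, hM1⟩ := hj
  have hMne : (M j : ℝ) ≠ 0 := by
    have : (0:ℝ) < M j := by exact_mod_cast hM1
    exact ne_of_gt this
  have h3 : (((c j).descFactorial k : ℕ) : ℝ) = ∏ i ∈ Finset.range k, ((c j : ℝ) - i) := by
    rw [Nat.descFactorial_eq_prod_range, Nat.cast_prod]
    refine Finset.prod_congr rfl fun i hi => ?_
    exact_mod_cast Nat.cast_sub ((Finset.mem_range.mp hi).le.trans hkc)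
  have hdf : ((c j).choose k : ℝ) * (k.factorial : ℝ)
      = ∏ i ∈ Finset.range k, ((c j : ℝ) - i) := by
    rw [← h3, Nat.descFactorial_eq_factorial_mul_choose]
    push_cast
    ring
  have h4 : ∏ i ∈ Finset.range k, ((c j : ℝ) / (M j : ℝ) - i * (M j : ℝ)⁻¹)
      = (∏ i ∈ Finset.range k, ((c j : ℝ) - i)) / (M j : ℝ) ^ k := by
    calc ∏ i ∈ Finset.range k, ((c j : ℝ) / (M j : ℝ) - i * (M j : ℝ)⁻¹)
        = ∏ i ∈ Finset.range k, (((c j : ℝ) - i) / (M j : ℝ)) := by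
          refine Finset.prod_congr rfl fun i _ => ?_
          field_simp
      _ = (∏ i ∈ Finset.range k, ((c j : ℝ) - i)) / (M j : ℝ) ^ k := by
          rw [Finset.prod_div_distrib, Finset.prod_const, Finset.card_range]
  have hfne : (k.factorial : ℝ) ≠ 0 := Nat.cast_ne_zero.mpr k.factorial_ne_zero
  rw [h4, ← hdf]
  field_simp

lemma pow_base_tendsto_exp (lam : ℝ) (k : ℕ) (n M : ℕ → ℕ)
    (hn : Tendsto n atTop atTop) (hM : Tendsto M atTop atTop)
    (hratio : Tendsto (fun j => (n j : ℝ) / (M j : ℝ)) atTop (nhds lam)) :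
    Tendsto (fun j => (1 + (-2) / (M j : ℝ)) ^ (n j - 2 * k)) atTop
      (nhds (Real.exp (-(2 * lam)))) := by
  have hMr : Tendsto (fun j => (M j : ℝ)) atTop atTop :=
    tendsto_natCast_atTop_atTop.comp hM
  have hMinv : Tendsto (fun j => (M j : ℝ)⁻¹) atTop (nhds 0) :=
    hMr.inv_tendsto_atTop
  have hlog : Tendsto (fun j => (M j : ℝ) * Real.log (1 + (-2) / (M j : ℝ))) atTop
      (nhds (-2)) := (Real.tendsto_mul_log_one_add_div_atTop (-2)).comp hMr
  have hrat2 : Tendsto (fun j => (n j : ℝ) / (M j : ℝ) - (2 * k : ℝ) * (M j : ℝ)⁻¹)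
      atTop (nhds lam) := by
    have := hratio.sub (hMinv.const_mul ((2 * k : ℕ) : ℝ))
    simpa using this
  have hexp : Tendsto (fun j => ((n j : ℝ) / (M j : ℝ) - (2 * k : ℝ) * (M j : ℝ)⁻¹)
      * ((M j : ℝ) * Real.log (1 + (-2) / (M j : ℝ)))) atTop (nhds (lam * (-2))) :=
    hrat2.mul hlog
  have hfinal := (Real.continuous_exp.tendsto _).comp hexp
  have : Real.exp (lam * (-2)) = Real.exp (-(2 * lam)) := by ring_nf
  rw [this] at hfinal
  refine hfinal.congr' ?_
  have hev : ∀ᶠ j in atTop, 2 * k ≤ n j ∧ 3 ≤ M j :=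
    (hn.eventually_ge_atTop (2 * k)).and (hM.eventually_ge_atTop 3)
  filter_upwards [hev] with j hj
  obtain ⟨hkn, hM3⟩ := hj
  have hMpos : (0:ℝ) < M j := by
    have : (0:ℕ) < M j := by omega
    exact_mod_cast this
  have hbpos : (0:ℝ) < 1 + (-2) / (M j : ℝ) := by
    have h2 : (2:ℝ) / (M j : ℝ) < 1 := by
      rw [div_lt_one hMpos]
      have : (3:ℝ) ≤ M j := by exact_mod_cast hM3
      linarith
    have : (-2:ℝ) / (M j : ℝ) = -(2 / (M j : ℝ)) := by ring
    rw [this]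
    linarith
  simp only [Function.comp]
  rw [← Real.exp_log hbpos, ← Real.exp_nat_mul, Real.exp_log hbpos]
  congr 1
  have hcast : ((n j - 2 * k : ℕ) : ℝ) = (n j : ℝ) - 2 * k := by
    rw [Nat.cast_sub hkn]; push_cast; ring
  rw [hcast]
  field_simp

/-- If `n_j/M_j → λ ∈ (0,1]` with `k ≤ n_j ≤ M_j` and both `n_j, M_j → ∞`, then the normalized
second moments `S₂(k;M_j,n_j) = (1/(n_j² M_j^{n_j})) Σ_x m_k(x)²` converge to
`((λ^k/k!) e^{−λ})²`. -/
theorem normalized_second_moment_tendsto (lam : ℝ) (hlam0 : 0 < lam) (hlam1 : lam ≤ 1) (k : ℕ)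
    (n M : ℕ → ℕ) (hnpos : ∀ j, 0 < n j) (hMpos : ∀ j, 0 < M j)
    (hk : ∀ j, k ≤ n j) (hnM : ∀ j, n j ≤ M j)
    (hn : Tendsto n atTop atTop) (hM : Tendsto M atTop atTop)
    (hratio : Tendsto (fun j => (n j : ℝ) / (M j : ℝ)) atTop (nhds lam))
    (𝓝 : ∀ j, Finset (Fin (M j))) (h𝓝 : ∀ j, (𝓝 j).card = n j) :
    Tendsto (fun j =>
        (1 / ((n j : ℝ) ^ 2 * (M j : ℝ) ^ (n j))) * ∑ x : Fin (n j) → Fin (M j),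
          ((((𝓝 j).filter (fun y =>
              (Finset.univ.filter (fun i : Fin (n j) => x i = y)).card = k)).card : ℝ)) ^ 2)
      atTop (nhds ((lam ^ k / (k.factorial : ℝ) * Real.exp (-lam)) ^ 2)) := by
  have hMr : Tendsto (fun j => (M j : ℝ)) atTop atTop :=
    tendsto_natCast_atTop_atTop.comp hM
  have hnr : Tendsto (fun j => (n j : ℝ)) atTop atTop :=
    tendsto_natCast_atTop_atTop.comp hn
  have hninv : Tendsto (fun j => (n j : ℝ)⁻¹) atTop (nhds 0) := hnr.inv_tendsto_atTop
  have hMinv : Tendsto (fun j => (M j : ℝ)⁻¹) atTop (nhds 0) := hMr.inv_tendsto_atTop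
  -- the two "term" sequences
  set term1 : ℕ → ℝ := fun j => (n j : ℝ)⁻¹ * (((n j).choose k : ℝ) / (M j : ℝ) ^ k)
      * (((M j - 1 : ℕ) : ℝ) / (M j : ℝ)) ^ (n j - k) with hterm1def
  set term2 : ℕ → ℝ := fun j => (((n j : ℝ) - 1) / (n j : ℝ))
      * (((n j).choose k : ℝ) / (M j : ℝ) ^ k)
      * (((n j - k).choose k : ℝ) / (M j : ℝ) ^ k)
      * (((M j - 2 : ℕ) : ℝ) / (M j : ℝ)) ^ (n j - 2 * k) with hterm2def
  -- limit of choose(n,k)/M^k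
  have hch1 : Tendsto (fun j => ((n j).choose k : ℝ) / (M j : ℝ) ^ k) atTop
      (nhds (lam ^ k / (k.factorial : ℝ))) :=
    choose_div_pow_tendsto lam k n M hn hM hratio
  -- limit of choose(n-k,k)/M^k
  have hnk : Tendsto (fun j => n j - k) atTop atTop := by
    rw [tendsto_atTop_atTop]
    intro b
    obtain ⟨N, hN⟩ := (tendsto_atTop_atTop.mp hn) (b + k)
    exact ⟨N, fun j hj => by have := hN j hj; omega⟩
  have hrationk : Tendsto (fun j => ((n j - k : ℕ) : ℝ) / (M j : ℝ)) atTop (nhds lam) := by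
    have h1 : Tendsto (fun j => (n j : ℝ) / (M j : ℝ) - (k : ℝ) * (M j : ℝ)⁻¹) atTop
        (nhds lam) := by
      have := hratio.sub (hMinv.const_mul (k : ℝ))
      simpa using this
    refine h1.congr fun j => ?_
    rw [Nat.cast_sub (hk j)]
    field_simp
  have hch2 : Tendsto (fun j => ((n j - k).choose k : ℝ) / (M j : ℝ) ^ k) atTop
      (nhds (lam ^ k / (k.factorial : ℝ))) :=
    choose_div_pow_tendsto lam k (fun j => n j - k) M hnk hM hrationk
  -- limit of the base ratio power
  have hpow : Tendsto (fun j => (((M j - 2 : ℕ) : ℝ) / (M j : ℝ)) ^ (n j - 2 * k)) atTop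
      (nhds (Real.exp (-(2 * lam)))) := by
    refine (pow_base_tendsto_exp lam k n M hn hM hratio).congr' ?_
    filter_upwards [hM.eventually_ge_atTop 2] with j hj
    congr 1
    have h2 : ((M j - 2 : ℕ) : ℝ) = (M j : ℝ) - 2 := by
      rw [Nat.cast_sub hj]; norm_num
    have hMne : (M j : ℝ) ≠ 0 := by
      have : (0:ℝ) < M j := by exact_mod_cast hMpos j
      exact ne_of_gt this
    rw [h2]
    field_simp
    ring
  -- term1 → 0
  have ht1 : Tendsto term1 atTop (nhds 0) := by
    have hg : Tendsto (fun j => (n j : ℝ)⁻¹ * (((n j).choose k : ℝ) / (M j : ℝ) ^ k)) atTop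
        (nhds 0) := by
      have := hninv.mul hch1
      simpa using this
    refine squeeze_zero (fun j => ?_) (fun j => ?_) hg
    · apply mul_nonneg (mul_nonneg (by positivity) (by positivity)) (by positivity)
    · have hb : (((M j - 1 : ℕ) : ℝ) / (M j : ℝ)) ^ (n j - k) ≤ 1 := by
        apply pow_le_one₀ (by positivity)
        rw [div_le_one (by exact_mod_cast hMpos j)]
        exact_mod_cast Nat.sub_le (M j) 1
      calc (n j : ℝ)⁻¹ * (((n j).choose k : ℝ) / (M j : ℝ) ^ k)
            * (((M j - 1 : ℕ) : ℝ) / (M j : ℝ)) ^ (n j - k)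
          ≤ (n j : ℝ)⁻¹ * (((n j).choose k : ℝ) / (M j : ℝ) ^ k) * 1 := by
            apply mul_le_mul_of_nonneg_left hb
            apply mul_nonneg (by positivity) (by positivity)
        _ = (n j : ℝ)⁻¹ * (((n j).choose k : ℝ) / (M j : ℝ) ^ k) := by ring
  -- term2 → L1 * L1 * exp(-2λ)
  have hfrac : Tendsto (fun j => ((n j : ℝ) - 1) / (n j : ℝ)) atTop (nhds 1) := by
    have h1 : Tendsto (fun j => 1 - (n j : ℝ)⁻¹) atTop (nhds 1) := by
      have := (tendsto_const_nhds (x := (1:ℝ)) (f := atTop)).sub hninv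
      simpa using this
    refine h1.congr fun j => ?_
    have hne : (n j : ℝ) ≠ 0 := by
      have : (0:ℝ) < n j := by exact_mod_cast hnpos j
      exact ne_of_gt this
    field_simp
  have ht2 : Tendsto term2 atTop
      (nhds (1 * (lam ^ k / (k.factorial : ℝ)) * (lam ^ k / (k.factorial : ℝ))
        * Real.exp (-(2 * lam)))) :=
    ((hfrac.mul hch1).mul hch2).mul hpow
  -- combine
  have hsum : Tendsto (fun j => term1 j + term2 j) atTop
      (nhds (0 + 1 * (lam ^ k / (k.factorial : ℝ)) * (lam ^ k / (k.factorial : ℝ))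
        * Real.exp (-(2 * lam)))) := by
    exact ht1.add ht2
  have hval : 0 + 1 * (lam ^ k / (k.factorial : ℝ)) * (lam ^ k / (k.factorial : ℝ))
      * Real.exp (-(2 * lam)) = (lam ^ k / (k.factorial : ℝ) * Real.exp (-lam)) ^ 2 := by
    have hexp : Real.exp (-(2 * lam)) = Real.exp (-lam) ^ 2 := by
      rw [← Real.exp_nat_mul]
      congr 1
      push_cast
      ring
    rw [hexp]
    ring
  rw [hval] at hsum
  refine hsum.congr' ?_
  -- eventual equality
  filter_upwards [hn.eventually_ge_atTop (2 * k)] with j h2k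
  have hMne : (M j : ℝ) ≠ 0 := by
    have : (0:ℝ) < M j := by exact_mod_cast hMpos j
    exact ne_of_gt this
  have hnne : (n j : ℝ) ≠ 0 := by
    have : (0:ℝ) < n j := by exact_mod_cast hnpos j
    exact ne_of_gt this
  rw [sum_sq_eq (n j) (M j) k (𝓝 j), h𝓝 j]
  push_cast
  have hMk : (M j : ℝ) ^ (n j) = (M j : ℝ) ^ (n j - k) * (M j : ℝ) ^ k :=
    (pow_sub_mul_pow (M j : ℝ) (hk j)).symm
  have hMk2 : (M j : ℝ) ^ (n j - k) = (M j : ℝ) ^ (n j - 2 * k) * (M j : ℝ) ^ k := by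
    rw [show n j - 2 * k = n j - k - k from by omega]
    exact (pow_sub_mul_pow (M j : ℝ) (by omega)).symm
  rw [hterm1def, hterm2def]
  simp only []
  rw [div_pow, div_pow, hMk, hMk2]
  field_simp
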